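/- Let β ≤ α be an infinite cardinal, let G be one of the Grassmannians G_β(V) or G^β(V), and let f : G → G be a bijection. Suppose that for every X ∈ G there is a semilinear isomorphism l_X : X → f(X) such that l_X(Z) = f(Z) for every Z ∈ G with Z ⊆ X. Then for all X, Y ∈ G with X ∩ Y ≠ 0 and every 1-dimensional subspace P ⊆ X ∩ Y, one has l_X(P) = l_Y(P). -/

import Mathlib

/- Setting: `V` is a left vector space over a division ring `K` whose dimension
`α = Module.rank K V` is an infinite cardinal. -/

universe u v w

section Defs

variable (K : Type u) (V : Type v) [DivisionRing K] [AddCommGroup V] [Module K V]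

/-- `B ⊆ V` is a basis of `V`, given as a set of vectors. -/
def IsBasisSet (B : Set V) : Prop :=
  LinearIndependent K ((↑) : B → V) ∧ Submodule.span K B = ⊤

/-- The Grassmannian `G_β(V)`: all subspaces of dimension `β` and codimension `α`. -/
def Gsub (β : Cardinal.{v}) : Set (Submodule K V) :=
  {X | Module.rank K ↥X = β ∧ Module.rank K (V ⧸ X) = Module.rank K V}

/-- The Grassmannian `G^β(V)`: all subspaces of dimension `α` and codimension `β`. -/
def Gsup (β : Cardinal.{v}) : Set (Submodule K V) :=
  {X | Module.rank K ↥X = Module.rank K V ∧ Module.rank K (V ⧸ X) = β}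

/-- The apartment of a Grassmannian `G` defined by a basis `B`:
all elements of `G` spanned by subsets of `B`. -/
def apartmentOf (G : Set (Submodule K V)) (B : Set V) : Set (Submodule K V) :=
  {X | X ∈ G ∧ ∃ S ⊆ B, X = Submodule.span K S}

end Defs

variable {K : Type u} {V : Type v} [DivisionRing K] [AddCommGroup V] [Module K V]

section Helpers
open Cardinal Submodule

lemma card_left {a b γ : Cardinal.{v}} (h : a + b = γ) (hγ : ℵ₀ ≤ γ) (hb : b < γ) : a = γ := by
  have ha : a ≤ γ := h ▸ le_self_add
  rcases lt_or_eq_of_le ha with ha' | ha'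
  · exact absurd h (by exact ne_of_lt (Cardinal.add_lt_of_lt hγ ha' hb))
  · exact ha'

lemma rank_sup_of_inf_bot {A B : Submodule K V} (h : A ⊓ B = ⊥) :
    Module.rank K ↥(A ⊔ B) = Module.rank K ↥A + Module.rank K ↥B := by
  have := Submodule.rank_sup_add_rank_inf_eq A B
  rw [h] at this
  simpa using this

lemma corank_eq_of_compl {A B : Submodule K V} (hs : A ⊔ B = ⊤) (hi : A ⊓ B = ⊥) :
    Module.rank K (V ⧸ A) = Module.rank K ↥B := by
  have hc : IsCompl A B := ⟨disjoint_iff.2 hi, codisjoint_iff.2 hs⟩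
  exact (Submodule.quotientEquivOfIsCompl A B hc).rank_eq

lemma corank_mono {A B : Submodule K V} (h : A ≤ B) :
    Module.rank K (V ⧸ B) ≤ Module.rank K (V ⧸ A) := by
  apply LinearMap.rank_le_of_surjective (Submodule.mapQ A B LinearMap.id h)
  intro x
  obtain ⟨v, rfl⟩ := Submodule.mkQ_surjective B x
  exact ⟨A.mkQ v, by simp [Submodule.mapQ_apply, Submodule.mkQ_apply]⟩

lemma exists_compl_le {P W : Submodule K V} (h : P ≤ W) :
    ∃ C, C ≤ W ∧ P ⊔ C = W ∧ P ⊓ C = ⊥ := by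
  obtain ⟨C', hC'⟩ := Submodule.exists_isCompl (P.comap W.subtype)
  refine ⟨C'.map W.subtype, Submodule.map_subtype_le _ _, ?_, ?_⟩
  · have : P.comap W.subtype ⊔ C' = ⊤ := codisjoint_iff.1 hC'.codisjoint
    have h2 := congrArg (Submodule.map W.subtype) this
    rw [Submodule.map_sup, Submodule.map_comap_subtype, Submodule.map_subtype_top,
      inf_eq_right.2 h] at h2
    exact h2
  · have : P.comap W.subtype ⊓ C' = ⊥ := disjoint_iff.1 hC'.disjoint
    have h2 := congrArg (Submodule.map W.subtype) this
    rw [Submodule.map_inf _ W.injective_subtype, Submodule.map_comap_subtype,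
      Submodule.map_bot, inf_eq_right.2 h] at h2
    exact h2

lemma split_half (C : Submodule K V) (h : ℵ₀ ≤ Module.rank K ↥C) :
    ∃ C₁ C₂ : Submodule K V, C₁ ≤ C ∧ C₂ ≤ C ∧ C₁ ⊔ C₂ = C ∧ C₁ ⊓ C₂ = ⊥ ∧
      Module.rank K ↥C₁ = Module.rank K ↥C ∧ Module.rank K ↥C₂ = Module.rank K ↥C := by
  classical
  set ι := ↥(Module.Basis.ofVectorSpaceIndex K ↥C)
  let b : Module.Basis ι K ↥C := Module.Basis.ofVectorSpace K ↥C
  have hmk : (Cardinal.mk ι) = Module.rank K ↥C := by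
    rw [← b.mk_eq_rank'']
  have hsum : Cardinal.mk (ι ⊕ ι) = Cardinal.mk ι := by
    simp only [Cardinal.mk_sum, Cardinal.lift_id]
    rw [hmk, Cardinal.add_eq_self h]
  obtain ⟨e⟩ := Cardinal.eq.1 hsum
  -- basis indexed by ι ⊕ ι
  let b' : Module.Basis (ι ⊕ ι) K ↥C := b.reindex e.symm
  have hb' : ∀ i, b' i = b (e i) := fun i => by simp [b']
  have hli : LinearIndependent K (⇑b') := b'.linearIndependent
  let D₁ : Submodule K ↥C := Submodule.span K (Set.range (⇑b' ∘ Sum.inl))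
  let D₂ : Submodule K ↥C := Submodule.span K (Set.range (⇑b' ∘ Sum.inr))
  have hrange : Set.range (⇑b' ∘ Sum.inl) ∪ Set.range (⇑b' ∘ Sum.inr) = Set.range ⇑b' := by
    ext x
    constructor
    · rintro (⟨i, rfl⟩ | ⟨i, rfl⟩) <;> exact ⟨_, rfl⟩
    · rintro ⟨i | i, rfl⟩
      · exact Or.inl ⟨i, rfl⟩
      · exact Or.inr ⟨i, rfl⟩
  have hsup : D₁ ⊔ D₂ = ⊤ := by
    rw [← Submodule.span_union, hrange, b'.span_eq]
  have hinf : D₁ ⊓ D₂ = ⊥ := by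
    have hd : Disjoint (Set.range (Sum.inl : ι → ι ⊕ ι)) (Set.range (Sum.inr : ι → ι ⊕ ι)) := by
      rw [Set.disjoint_left]; rintro x ⟨i, rfl⟩ ⟨j, hj⟩; simp at hj
    have := hli.disjoint_span_image hd
    rw [disjoint_iff] at this
    have h1 : ⇑b' '' Set.range Sum.inl = Set.range (⇑b' ∘ Sum.inl) := by
      rw [← Set.range_comp]
    have h2 : ⇑b' '' Set.range Sum.inr = Set.range (⇑b' ∘ Sum.inr) := by
      rw [← Set.range_comp]
    rwa [h1, h2] at this
  have hr1 : Module.rank K ↥D₁ = Module.rank K ↥C := by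
    have hli1 : LinearIndependent K (⇑b' ∘ Sum.inl) := hli.comp Sum.inl Sum.inl_injective
    rw [rank_span hli1, Cardinal.mk_range_eq _ (hli1.injective), hmk]
  have hr2 : Module.rank K ↥D₂ = Module.rank K ↥C := by
    have hli2 : LinearIndependent K (⇑b' ∘ Sum.inr) := hli.comp Sum.inr Sum.inr_injective
    rw [rank_span hli2, Cardinal.mk_range_eq _ (hli2.injective), hmk]
  -- map up to V
  refine ⟨D₁.map C.subtype, D₂.map C.subtype, Submodule.map_subtype_le _ _,
    Submodule.map_subtype_le _ _, ?_, ?_, ?_, ?_⟩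
  · rw [← Submodule.map_sup, hsup, Submodule.map_subtype_top]
  · rw [← Submodule.map_inf _ C.injective_subtype, hinf, Submodule.map_bot]
  · rw [← (Submodule.equivMapOfInjective _ C.injective_subtype D₁).rank_eq]; exact hr1
  · rw [← (Submodule.equivMapOfInjective _ C.injective_subtype D₂).rank_eq]; exact hr2

lemma rank_span_singleton' {c : V} (hc : c ≠ 0) :
    Module.rank K ↥(Submodule.span K ({c} : Set V)) = 1 := by
  rw [Module.rank_eq_one_iff_finrank_eq_one]
  exact finrank_span_singleton hc

lemma closure_mem {γ δ : Cardinal.{v}} (hγ : ℵ₀ ≤ γ) (hδ : ℵ₀ ≤ δ)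
    {Z₀ Z₁ : Submodule K V} {c : V} (hc : c ≠ 0)
    (hsup : Z₁ ⊔ Submodule.span K {c} = Z₀) (hinf : Z₁ ⊓ Submodule.span K {c} = ⊥)
    (h0 : Module.rank K ↥Z₀ = γ ∧ Module.rank K (V ⧸ Z₀) = δ) :
    Module.rank K ↥Z₁ = γ ∧ Module.rank K (V ⧸ Z₁) = δ := by
  have hle : Z₁ ≤ Z₀ := hsup ▸ le_sup_left
  have hcZ₀ : Submodule.span K ({c} : Set V) ≤ Z₀ := hsup ▸ le_sup_right
  constructor
  · have h1 : Module.rank K ↥Z₁ + 1 = γ := by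
      rw [← rank_span_singleton' (K := K) hc, ← rank_sup_of_inf_bot hinf, hsup, h0.1]
    exact card_left h1 hγ (lt_of_lt_of_le Cardinal.one_lt_aleph0 hγ)
  · obtain ⟨T, hT⟩ := Submodule.exists_isCompl Z₀
    have hTsup : Z₀ ⊔ T = ⊤ := codisjoint_iff.1 hT.codisjoint
    have hTinf : Z₀ ⊓ T = ⊥ := disjoint_iff.1 hT.disjoint
    have hrT : Module.rank K ↥T = δ := by
      rw [← corank_eq_of_compl hTsup hTinf, h0.2]
    have hsup' : Z₁ ⊔ (Submodule.span K {c} ⊔ T) = ⊤ := by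
      rw [← sup_assoc, hsup, hTsup]
    have hinf' : Z₁ ⊓ (Submodule.span K {c} ⊔ T) = ⊥ := by
      rw [Submodule.eq_bot_iff]
      rintro x ⟨hx1, hx2⟩
      simp only [SetLike.mem_coe] at hx1 hx2
      rw [Submodule.mem_sup] at hx2
      obtain ⟨s, hs, t, ht, rfl⟩ := hx2
      have htZ₀ : t ∈ Z₀ := by
        have : (s + t) - s ∈ Z₀ := sub_mem (hle hx1) (hcZ₀ hs)
        simpa using this
      have ht0 : t = 0 := by
        have : t ∈ Z₀ ⊓ T := ⟨htZ₀, ht⟩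
        rwa [hTinf, Submodule.mem_bot] at this
      subst ht0
      have : s + 0 ∈ Z₁ ⊓ Submodule.span K {c} := ⟨hx1, by simpa using hs⟩
      rw [hinf, Submodule.mem_bot] at this
      exact this
    have hscT : Submodule.span K ({c} : Set V) ⊓ T = ⊥ := by
      rw [Submodule.eq_bot_iff]
      rintro x ⟨hx1, hx2⟩
      simp only [SetLike.mem_coe] at hx1 hx2
      have : x ∈ Z₀ ⊓ T := ⟨hcZ₀ hx1, hx2⟩
      rwa [hTinf, Submodule.mem_bot] at this
    rw [corank_eq_of_compl hsup' hinf', rank_sup_of_inf_bot hscT,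
      rank_span_singleton' (K := K) hc, hrT]
    exact Cardinal.add_eq_right hδ (le_trans Cardinal.one_le_aleph0 hδ)

lemma inter_family {G : Set (Submodule K V)}
    (hcl : ∀ Z₀ ∈ G, ∀ (Z₁ : Submodule K V) (c : V), c ≠ 0 →
      Z₁ ⊔ Submodule.span K {c} = Z₀ → Z₁ ⊓ Submodule.span K {c} = ⊥ → Z₁ ∈ G)
    {P Z₀ : Submodule K V} (hZ₀ : Z₀ ∈ G) (hP : P ≤ Z₀)
    {w : V} (hw : ∀ Z ∈ G, P ≤ Z → Z ≤ Z₀ → w ∈ Z) : w ∈ P := by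
  obtain ⟨C, hCle, hCsup, hCinf⟩ := exists_compl_le hP
  have hwZ₀ : w ∈ Z₀ := hw Z₀ hZ₀ hP le_rfl
  rw [← hCsup, Submodule.mem_sup] at hwZ₀
  obtain ⟨q, hq, c, hcC, rfl⟩ := hwZ₀
  by_cases hc : c = 0
  · subst hc; simpa using hq
  · exfalso
    have hcspan : Submodule.span K ({c} : Set V) ≤ C :=
      Submodule.span_le.2 (Set.singleton_subset_iff.2 hcC)
    obtain ⟨C', hC'le, hC'sup, hC'inf⟩ := exists_compl_le hcspan
    set Z₁ := P ⊔ C' with hZ₁def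
    have hZ₁sup : Z₁ ⊔ Submodule.span K {c} = Z₀ := by
      rw [hZ₁def, sup_assoc, sup_comm C' _, hC'sup, hCsup]
    have hZ₁inf : Z₁ ⊓ Submodule.span K {c} = ⊥ := by
      rw [Submodule.eq_bot_iff]
      rintro x ⟨hx1, hx2⟩
      simp only [SetLike.mem_coe] at hx1 hx2
      rw [Submodule.mem_sup] at hx1
      obtain ⟨q', hq', c', hc', rfl⟩ := hx1
      have hq'0 : q' = 0 := by
        have hmem : q' ∈ P ⊓ C := by
          refine ⟨hq', ?_⟩
          have : (q' + c') - c' ∈ C := sub_mem (hcspan hx2) (hC'le hc')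
          simpa using this
        rwa [hCinf, Submodule.mem_bot] at hmem
      subst hq'0
      have : (0 : V) + c' ∈ Submodule.span K ({c} : Set V) ⊓ C' := ⟨hx2, by simpa using hc'⟩
      rw [hC'inf, Submodule.mem_bot] at this
      exact this
    have hZ₁G : Z₁ ∈ G := hcl Z₀ hZ₀ Z₁ c hc hZ₁sup hZ₁inf
    have hwZ₁ : q + c ∈ Z₁ := hw Z₁ hZ₁G le_sup_left (hZ₁sup ▸ le_sup_left)
    have hcZ₁ : c ∈ Z₁ := by
      have : (q + c) - q ∈ Z₁ := sub_mem hwZ₁ (le_sup_left (a := P) (b := C') hq)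
      simpa using this
    have : c ∈ Z₁ ⊓ Submodule.span K ({c} : Set V) :=
      ⟨hcZ₁, Submodule.mem_span_singleton_self c⟩
    rw [hZ₁inf, Submodule.mem_bot] at this
    exact hc this

lemma bridge {G : Set (Submodule K V)}
    (hcl : ∀ Z₀ ∈ G, ∀ (Z₁ : Submodule K V) (c : V), c ≠ 0 →
      Z₁ ⊔ Submodule.span K {c} = Z₀ → Z₁ ⊓ Submodule.span K {c} = ⊥ → Z₁ ∈ G)
    (f : Submodule K V → Submodule K V) (l : (X : Submodule K V) → ↥X → V)
    (hinj : ∀ X ∈ G, Function.Injective (l X))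
    (hcompat : ∀ X ∈ G, ∀ Z ∈ G, Z ≤ X →
      l X '' {x : ↥X | (x : V) ∈ Z} = ((f Z : Submodule K V) : Set V))
    {X U P Z₀ : Submodule K V} (hX : X ∈ G) (hU : U ∈ G) (hZ₀ : Z₀ ∈ G)
    (hPZ : P ≤ Z₀) (hZX : Z₀ ≤ X) (hZU : Z₀ ≤ U) :
    l X '' {x : ↥X | (x : V) ∈ P} = l U '' {u : ↥U | (u : V) ∈ P} := by
  set 𝒵 : Set (Submodule K V) := {Z | Z ∈ G ∧ P ≤ Z ∧ Z ≤ Z₀} with h𝒵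
  haveI : Nonempty ↥𝒵 := ⟨⟨Z₀, hZ₀, hPZ, le_rfl⟩⟩
  have key : ∀ A, A ∈ G → Z₀ ≤ A →
      l A '' {x : ↥A | (x : V) ∈ P} = ⋂ (Z : ↥𝒵), ((f Z : Submodule K V) : Set V) := by
    intro A hA hZA
    have hset : {x : ↥A | (x : V) ∈ P} =
        ⋂ (Z : ↥𝒵), {x : ↥A | (x : V) ∈ (Z : Submodule K V)} := by
      ext x
      simp only [Set.mem_iInter, Set.mem_setOf_eq]
      constructor
      · intro hx Z; exact Z.2.2.1 hx
      · intro hx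
        exact inter_family hcl hZ₀ hPZ (fun Z hZ hPZ' hZZ₀ => hx ⟨Z, hZ, hPZ', hZZ₀⟩)
    rw [hset, Set.InjOn.image_iInter_eq ((hinj A hA).injOn)]
    exact Set.iInter_congr (fun Z => hcompat A hA Z Z.2.1 (Z.2.2.2.trans hZA))
  rw [key X hX hZX, key U hU hZU]

lemma rank_le_corank {A U : Submodule K V} (h : A ⊓ U = ⊥) :
    Module.rank K ↥A ≤ Module.rank K (V ⧸ U) := by
  apply LinearMap.rank_le_of_injective (U.mkQ.comp A.subtype)
  intro x y hxy
  have : (x : V) - y ∈ U := by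
    rw [← Submodule.Quotient.eq]
    exact hxy
  have hA : (x : V) - y ∈ A := sub_mem x.2 y.2
  have : (x : V) - y ∈ A ⊓ U := ⟨hA, this⟩
  rw [h, Submodule.mem_bot, sub_eq_zero] at this
  exact Subtype.ext this

lemma corank_eq_of_le_corank_eq {Z X : Submodule K V}
    (hZX : Z ≤ X) (hX : Module.rank K (V ⧸ X) = Module.rank K V) :
    Module.rank K (V ⧸ Z) = Module.rank K V :=
  le_antisymm (rank_quotient_le Z) (hX ▸ corank_mono hZX)

lemma construct_eq (hα : ℵ₀ ≤ Module.rank K V) {X Y P : Submodule K V}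
    (hX : Module.rank K ↥X = Module.rank K V ∧ Module.rank K (V ⧸ X) = Module.rank K V)
    (hY : Module.rank K ↥Y = Module.rank K V ∧ Module.rank K (V ⧸ Y) = Module.rank K V)
    (hP1 : Module.rank K ↥P = 1) (hPX : P ≤ X) (hPY : P ≤ Y) :
    ∃ U ZX ZY : Submodule K V,
      (Module.rank K ↥U = Module.rank K V ∧ Module.rank K (V ⧸ U) = Module.rank K V) ∧
      (Module.rank K ↥ZX = Module.rank K V ∧ Module.rank K (V ⧸ ZX) = Module.rank K V) ∧
      (Module.rank K ↥ZY = Module.rank K V ∧ Module.rank K (V ⧸ ZY) = Module.rank K V) ∧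
      P ≤ ZX ∧ ZX ≤ X ∧ ZX ≤ U ∧ P ≤ ZY ∧ ZY ≤ Y ∧ ZY ≤ U := by
  set α := Module.rank K V with hαdef
  by_cases hbig : Module.rank K ↥(X ⊓ Y) = α
  · -- X ∩ Y has full rank
    obtain ⟨C, hCle, hCsup, hCinf⟩ := exists_compl_le (le_inf hPX hPY)
    have hrC : Module.rank K ↥C = α := by
      have h1 : Module.rank K ↥C + 1 = α := by
        rw [← hP1, add_comm, ← rank_sup_of_inf_bot hCinf, hCsup, hbig]
      exact card_left h1 hα (lt_of_lt_of_le Cardinal.one_lt_aleph0 hα)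
    obtain ⟨C₁, C₂, hC₁le, hC₂le, hCsup', hCinf', hrC₁, hrC₂⟩ :=
      split_half C (hrC ▸ hα)
    have hdisj : C₂ ⊓ (P ⊔ C₁) = ⊥ := by
      rw [Submodule.eq_bot_iff]
      rintro x ⟨hx1, hx2⟩
      simp only [SetLike.mem_coe] at hx1 hx2
      rw [Submodule.mem_sup] at hx2
      obtain ⟨q, hq, c₁, hc₁, hx⟩ := hx2
      have hq0 : q = 0 := by
        have hqC : q ∈ C := by
          have : x - c₁ ∈ C := sub_mem (hC₂le hx1) (hC₁le hc₁)
          rwa [← hx, add_sub_cancel_right] at this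
        have : q ∈ P ⊓ C := ⟨hq, hqC⟩
        rwa [hCinf, Submodule.mem_bot] at this
      subst hq0
      rw [zero_add] at hx
      subst hx
      have : c₁ ∈ C₁ ⊓ C₂ := ⟨hc₁, hx1⟩
      rwa [hCinf', Submodule.mem_bot] at this
    have hUpair : Module.rank K ↥(P ⊔ C₁) = α ∧ Module.rank K (V ⧸ (P ⊔ C₁)) = α := by
      constructor
      · refine le_antisymm (Submodule.rank_le _) ?_
        calc α = Module.rank K ↥C₁ := (hrC₁.trans hrC).symm
        _ ≤ _ := Submodule.rank_mono le_sup_right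
      · refine le_antisymm (rank_quotient_le _) ?_
        calc α = Module.rank K ↥C₂ := (hrC₂.trans hrC).symm
        _ ≤ _ := rank_le_corank hdisj
    exact ⟨P ⊔ C₁, P ⊔ C₁, P ⊔ C₁, hUpair, hUpair, hUpair, le_sup_left,
      sup_le hPX ((hC₁le.trans hCle).trans inf_le_left), le_rfl, le_sup_left,
      sup_le hPY ((hC₁le.trans hCle).trans inf_le_right), le_rfl⟩
  · -- X ∩ Y has small rank
    have hsmall : Module.rank K ↥(X ⊓ Y) < α :=
      lt_of_le_of_ne (hαdef ▸ Submodule.rank_le _) hbig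
    obtain ⟨D, hDle, hDsup, hDinf⟩ := exists_compl_le (inf_le_left : X ⊓ Y ≤ X)
    obtain ⟨E, hEle, hEsup, hEinf⟩ := exists_compl_le (inf_le_right : X ⊓ Y ≤ Y)
    have hrD : Module.rank K ↥D = α := by
      have h1 : Module.rank K ↥D + Module.rank K ↥(X ⊓ Y) = α := by
        rw [add_comm, ← rank_sup_of_inf_bot hDinf, hDsup, hX.1]
      exact card_left h1 hα hsmall
    have hrE : Module.rank K ↥E = α := by
      have h1 : Module.rank K ↥E + Module.rank K ↥(X ⊓ Y) = α := by
        rw [add_comm, ← rank_sup_of_inf_bot hEinf, hEsup, hY.1]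
      exact card_left h1 hα hsmall
    obtain ⟨D₁, D₂, hD₁le, hD₂le, hDsup', hDinf', hrD₁, hrD₂⟩ := split_half D (hrD ▸ hα)
    obtain ⟨E₁, E₂, hE₁le, hE₂le, hEsup', hEinf', hrE₁, hrE₂⟩ := split_half E (hrE ▸ hα)
    have hD₁X : D₁ ≤ X := hD₁le.trans hDle
    have hE₁Y : E₁ ≤ Y := hE₁le.trans hEle
    have hXE : X ⊓ E = ⊥ := by
      have hle' : X ⊓ E ≤ (X ⊓ Y) ⊓ E :=
        le_inf (le_inf inf_le_left (inf_le_right.trans hEle)) inf_le_right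
      exact le_bot_iff.1 (hEinf ▸ hle')
    set U := (P ⊔ D₁) ⊔ E₁ with hUdef
    have hPXY : P ≤ X ⊓ Y := le_inf hPX hPY
    have hZXle : P ⊔ D₁ ≤ X := sup_le hPX hD₁X
    have hZYle : P ⊔ E₁ ≤ Y := sup_le hPY hE₁Y
    have hZXpair : Module.rank K ↥(P ⊔ D₁) = α ∧ Module.rank K (V ⧸ (P ⊔ D₁)) = α := by
      constructor
      · refine le_antisymm (Submodule.rank_le _) ?_
        calc α = Module.rank K ↥D₁ := (hrD₁.trans hrD).symm
        _ ≤ _ := Submodule.rank_mono le_sup_right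
      · exact corank_eq_of_le_corank_eq hZXle hX.2
    have hZYpair : Module.rank K ↥(P ⊔ E₁) = α ∧ Module.rank K (V ⧸ (P ⊔ E₁)) = α := by
      constructor
      · refine le_antisymm (Submodule.rank_le _) ?_
        calc α = Module.rank K ↥E₁ := (hrE₁.trans hrE).symm
        _ ≤ _ := Submodule.rank_mono le_sup_right
      · exact corank_eq_of_le_corank_eq hZYle hY.2
    have hdisj : D₂ ⊓ U = ⊥ := by
      rw [Submodule.eq_bot_iff]
      rintro x ⟨hx1, hx2⟩
      simp only [SetLike.mem_coe] at hx1 hx2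
      rw [hUdef, Submodule.mem_sup] at hx2
      obtain ⟨w, hw, e₁, he₁, hx⟩ := hx2
      rw [Submodule.mem_sup] at hw
      obtain ⟨p, hp, d₁, hd₁, rfl⟩ := hw
      have he₁0 : e₁ = 0 := by
        have he₁X : e₁ ∈ X := by
          have h' : x - p - d₁ ∈ X := sub_mem (sub_mem (hDle (hD₂le hx1)) (hPX hp)) (hD₁X hd₁)
          rw [← hx] at h'
          have heq : p + d₁ + e₁ - p - d₁ = e₁ := by abel
          rwa [heq] at h'
        have : e₁ ∈ X ⊓ E := ⟨he₁X, hE₁le he₁⟩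
        rwa [hXE, Submodule.mem_bot] at this
      subst he₁0
      rw [add_zero] at hx
      have hp0 : p = 0 := by
        have hpD : p ∈ D := by
          have h' : x - d₁ ∈ D := sub_mem (hD₂le hx1) (hD₁le hd₁)
          rw [← hx] at h'
          have heq : p + d₁ - d₁ = p := by abel
          rwa [heq] at h'
        have : p ∈ (X ⊓ Y) ⊓ D := ⟨hPXY hp, hpD⟩
        rwa [hDinf, Submodule.mem_bot] at this
      subst hp0
      rw [zero_add] at hx
      subst hx
      have : d₁ ∈ D₁ ⊓ D₂ := ⟨hd₁, hx1⟩
      rwa [hDinf', Submodule.mem_bot] at this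
    have hUpair : Module.rank K ↥U = α ∧ Module.rank K (V ⧸ U) = α := by
      constructor
      · refine le_antisymm (Submodule.rank_le _) ?_
        calc α = Module.rank K ↥D₁ := (hrD₁.trans hrD).symm
        _ ≤ _ := Submodule.rank_mono (le_sup_right.trans le_sup_left)
      · refine le_antisymm (rank_quotient_le _) ?_
        calc α = Module.rank K ↥D₂ := (hrD₂.trans hrD).symm
        _ ≤ _ := rank_le_corank hdisj
    exact ⟨U, P ⊔ D₁, P ⊔ E₁, hUpair, hZXpair, hZYpair, le_sup_left, hZXle, le_sup_left,
      le_sup_left, hZYle, sup_le (le_sup_left.trans le_sup_left) le_sup_right⟩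

lemma rank_quot_bound (X Y : Submodule K V) :
    ∃ r, r ≤ Module.rank K (V ⧸ Y) ∧ Module.rank K ↥(X ⊓ Y) + r = Module.rank K ↥X := by
  set g := Y.mkQ.comp X.subtype with hgdef
  have hker : LinearMap.ker g = Submodule.comap X.subtype Y := by
    rw [hgdef, LinearMap.ker_comp, Submodule.ker_mkQ]
  refine ⟨Module.rank K (↥X ⧸ LinearMap.ker g), ?_, ?_⟩
  · calc Module.rank K (↥X ⧸ LinearMap.ker g)
        = Module.rank K ↥(LinearMap.range g) := (LinearMap.quotKerEquivRange g).rank_eq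
    _ ≤ Module.rank K (V ⧸ Y) := Submodule.rank_le _
  · have hcomap : Submodule.comap X.subtype Y = Submodule.comap X.subtype (X ⊓ Y) := by
      rw [Submodule.comap_inf, Submodule.comap_subtype_self, top_inf_eq]
    have hrker : Module.rank K ↥(LinearMap.ker g) = Module.rank K ↥(X ⊓ Y) := by
      rw [hker, hcomap]
      exact (Submodule.comapSubtypeEquivOfLe (inf_le_left : X ⊓ Y ≤ X)).rank_eq
    have := Submodule.rank_quotient_add_rank (LinearMap.ker g)
    rw [hrker] at this
    rw [add_comm]
    exact this

lemma corank_inf_le (X Y : Submodule K V) :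
    Module.rank K (V ⧸ (X ⊓ Y)) ≤ Module.rank K (V ⧸ X) + Module.rank K (V ⧸ Y) := by
  set g := X.mkQ.prod Y.mkQ with hgdef
  have hker : LinearMap.ker g = X ⊓ Y := by
    rw [hgdef, LinearMap.ker_prod, Submodule.ker_mkQ, Submodule.ker_mkQ]
  calc Module.rank K (V ⧸ (X ⊓ Y)) = Module.rank K (V ⧸ LinearMap.ker g) := by rw [hker]
  _ = Module.rank K ↥(LinearMap.range g) := (LinearMap.quotKerEquivRange g).rank_eq
  _ ≤ Module.rank K ((V ⧸ X) × (V ⧸ Y)) := Submodule.rank_le _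
  _ = Module.rank K (V ⧸ X) + Module.rank K (V ⧸ Y) := rank_prod'



lemma construct (hα : ℵ₀ ≤ Module.rank K V) {β : Cardinal.{v}}
    (hβinf : ℵ₀ ≤ β) (hβ : β ≤ Module.rank K V)
    {G : Set (Submodule K V)} (hG : G = Gsub K V β ∨ G = Gsup K V β)
    {X Y P : Submodule K V} (hX : X ∈ G) (hY : Y ∈ G)
    (hP1 : Module.rank K ↥P = 1) (hPX : P ≤ X) (hPY : P ≤ Y) :
    ∃ U ∈ G, ∃ ZX ∈ G, ∃ ZY ∈ G,
      P ≤ ZX ∧ ZX ≤ X ∧ ZX ≤ U ∧ P ≤ ZY ∧ ZY ≤ Y ∧ ZY ≤ U := by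
  rcases eq_or_lt_of_le hβ with heq | hlt
  · -- β = rank V : both Grassmannians coincide
    obtain ⟨hX1, hX2⟩ : Module.rank K ↥X = Module.rank K V ∧
        Module.rank K (V ⧸ X) = Module.rank K V := by
      rcases hG with rfl | rfl
      · exact ⟨hX.1.trans heq, hX.2⟩
      · exact ⟨hX.1, hX.2.trans heq⟩
    obtain ⟨hY1, hY2⟩ : Module.rank K ↥Y = Module.rank K V ∧
        Module.rank K (V ⧸ Y) = Module.rank K V := by
      rcases hG with rfl | rfl
      · exact ⟨hY.1.trans heq, hY.2⟩
      · exact ⟨hY.1, hY.2.trans heq⟩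
    obtain ⟨U, ZX, ZY, hU, hZX, hZY, h1, h2, h3, h4, h5, h6⟩ :=
      construct_eq hα ⟨hX1, hX2⟩ ⟨hY1, hY2⟩ hP1 hPX hPY
    have conv : ∀ W : Submodule K V,
        (Module.rank K ↥W = Module.rank K V ∧ Module.rank K (V ⧸ W) = Module.rank K V) →
        W ∈ G := by
      rcases hG with rfl | rfl
      · exact fun W hW => ⟨hW.1.trans heq.symm, hW.2⟩
      · exact fun W hW => ⟨hW.1, hW.2.trans heq.symm⟩
    exact ⟨U, conv U hU, ZX, conv ZX hZX, ZY, conv ZY hZY, h1, h2, h3, h4, h5, h6⟩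
  · rcases hG with rfl | rfl
    · -- Gsub, β < rank V : take U = X ⊔ Y
      have hrU : Module.rank K ↥(X ⊔ Y) = β := by
        refine le_antisymm ?_ (hX.1 ▸ Submodule.rank_mono le_sup_left)
        calc Module.rank K ↥(X ⊔ Y)
            ≤ Module.rank K ↥(X ⊔ Y) + Module.rank K ↥(X ⊓ Y) := le_self_add
        _ = Module.rank K ↥X + Module.rank K ↥Y := Submodule.rank_sup_add_rank_inf_eq X Y
        _ = β := by rw [hX.1, hY.1, Cardinal.add_eq_self hβinf]
      have hcU : Module.rank K (V ⧸ (X ⊔ Y)) = Module.rank K V := by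
        have h := Submodule.rank_quotient_add_rank (X ⊔ Y)
        rw [hrU] at h
        exact card_left h hα hlt
      exact ⟨X ⊔ Y, ⟨hrU, hcU⟩, X, hX, Y, hY, hPX, le_rfl, le_sup_left,
        hPY, le_rfl, le_sup_right⟩
    · -- Gsup, β < rank V : take U = X ⊓ Y
      have hrI : Module.rank K ↥(X ⊓ Y) = Module.rank K V := by
        obtain ⟨r, hr, hsum⟩ := rank_quot_bound X Y
        rw [hX.1] at hsum
        exact card_left hsum hα (lt_of_le_of_lt (hr.trans_eq hY.2) hlt)
      have hcI : Module.rank K (V ⧸ (X ⊓ Y)) = β := by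
        refine le_antisymm ?_ (hX.2 ▸ corank_mono inf_le_left)
        calc Module.rank K (V ⧸ (X ⊓ Y))
            ≤ Module.rank K (V ⧸ X) + Module.rank K (V ⧸ Y) := corank_inf_le X Y
        _ = β := by rw [hX.2, hY.2, Cardinal.add_eq_self hβinf]
      exact ⟨X ⊓ Y, ⟨hrI, hcI⟩, X ⊓ Y, ⟨hrI, hcI⟩, X ⊓ Y, ⟨hrI, hcI⟩,
        le_inf hPX hPY, inf_le_left, le_rfl, le_inf hPX hPY, inf_le_right, le_rfl⟩

end Helpers

/-- Lemma 6: given a family of semilinear isomorphisms `l_X : X → f(X)` (for `X ∈ G`)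
compatible with `f` on elements of `G` contained in `X`, any two of them agree on every
`1`-dimensional subspace of a nonzero intersection `X ∩ Y`. -/
theorem stmt12 (hα : Cardinal.aleph0 ≤ Module.rank K V)
    (β : Cardinal.{v}) (hβinf : Cardinal.aleph0 ≤ β) (hβ : β ≤ Module.rank K V)
    (G : Set (Submodule K V)) (hG : G = Gsub K V β ∨ G = Gsup K V β)
    (f : Submodule K V → Submodule K V) (hbij : Set.BijOn f G G)
    (l : (X : Submodule K V) → ↥X → V)
    (hadd : ∀ X ∈ G, ∀ x y : ↥X, l X (x + y) = l X x + l X y)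
    (hsemi : ∀ X ∈ G, ∃ σ : K ≃+* K, ∀ (a : K) (x : ↥X), l X (a • x) = σ a • l X x)
    (hinj : ∀ X ∈ G, Function.Injective (l X))
    (hrange : ∀ X ∈ G, Set.range (l X) = ((f X : Submodule K V) : Set V))
    (hcompat : ∀ X ∈ G, ∀ Z ∈ G, Z ≤ X →
      l X '' {x : ↥X | (x : V) ∈ Z} = ((f Z : Submodule K V) : Set V)) :
    ∀ X ∈ G, ∀ Y ∈ G, X ⊓ Y ≠ ⊥ →
      ∀ P : Submodule K V, Module.rank K ↥P = 1 → P ≤ X ⊓ Y →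
        l X '' {x : ↥X | (x : V) ∈ P} = l Y '' {y : ↥Y | (y : V) ∈ P} := by
  intro X hX Y hY _hne P hP1 hPle
  have hPX : P ≤ X := hPle.trans inf_le_left
  have hPY : P ≤ Y := hPle.trans inf_le_right
  have hcl : ∀ Z₀ ∈ G, ∀ (Z₁ : Submodule K V) (c : V), c ≠ 0 →
      Z₁ ⊔ Submodule.span K {c} = Z₀ → Z₁ ⊓ Submodule.span K {c} = ⊥ → Z₁ ∈ G := by
    rcases hG with rfl | rfl
    · exact fun Z₀ hZ₀ Z₁ c hc hs hi => closure_mem hβinf hα hc hs hi hZ₀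
    · exact fun Z₀ hZ₀ Z₁ c hc hs hi => closure_mem hα hβinf hc hs hi hZ₀
  obtain ⟨U, hU, ZX, hZX, ZY, hZY, h1, h2, h3, h4, h5, h6⟩ :=
    construct hα hβinf hβ hG hX hY hP1 hPX hPY
  rw [bridge hcl f l hinj hcompat hX hU hZX h1 h2 h3,
    bridge hcl f l hinj hcompat hY hU hZY h4 h5 h6]
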